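/- Let 𝒢 be a class of graphs closed under deletion of edges. Suppose that for every graph G ∈ 𝒢, all non-adjacent distinct vertices s, t ∈ V(G), and all non-negative integers k, l with l ≥ 1: whenever (k,l) is a connectivity pair for s and t in G, there exist k+l edge-disjoint s-t paths of which k+1 are internally disjoint. Then the same conclusion holds for every graph G ∈ 𝒢 and all distinct vertices s, t ∈ V(G) (adjacent or not). -/

import Mathlib

/-- A multigraph on vertex type `V` with edges drawn from `E`: each edge `e` in the
edge set joins the two (distinct) vertices of `ends e`.  Parallel edges are allowed,
loops are not. -/
structure Multigraph (V : Type) (E : Type) where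
  edgeSet : Set E
  ends : E → Sym2 V
  no_loops : ∀ e ∈ edgeSet, ¬ (ends e).IsDiag

namespace Multigraph

variable {V E : Type}

/-- Walks in a multigraph. -/
inductive Walk (G : Multigraph V E) : V → V → Type
  | nil (v : V) : Walk G v v
  | cons {u v w : V} (e : E) (he : e ∈ G.edgeSet) (huv : G.ends e = s(u, v))
      (p : Walk G v w) : Walk G u w

namespace Walk

variable {G : Multigraph V E}

/-- The list of vertices visited by a walk. -/
def support : {u v : V} → G.Walk u v → List V
  | u, _, .nil _ => [u]
  | u, _, .cons _ _ _ p => u :: p.support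

/-- The list of edges used by a walk. -/
def edges : {u v : V} → G.Walk u v → List E
  | _, _, .nil _ => []
  | _, _, .cons e _ _ p => e :: p.edges

/-- A walk is a path if it visits no vertex twice. -/
def IsPath {u v : V} (p : G.Walk u v) : Prop := p.support.Nodup

end Walk

/-- Two walks are edge-disjoint if they share no edge. -/
def EdgeDisjoint {G : Multigraph V E} {u₁ v₁ u₂ v₂ : V}
    (p : G.Walk u₁ v₁) (q : G.Walk u₂ v₂) : Prop :=
  ∀ e, e ∈ p.edges → e ∉ q.edges

/-- Two `s`-`t` walks are internally disjoint if they share no vertices other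
than `s` and `t`. -/
def InternallyDisjoint {G : Multigraph V E} {s t : V}
    (p q : G.Walk s t) : Prop :=
  ∀ v, v ∈ p.support → v ∈ q.support → v = s ∨ v = t


/-- `(W, F)` is an `s`-`t` disconnecting pair: `W` is a set of vertices avoiding `s`
and `t`, `F` is a set of edges of `G`, and `G - W - F` contains no `s`-`t` path. -/
def DisconnectingPair (G : Multigraph V E) (s t : V) (W : Finset V) (F : Finset E) : Prop :=
  (↑W : Set V) ⊆ ({s, t} : Set V)ᶜ ∧ (↑F : Set E) ⊆ G.edgeSet ∧
    ∀ p : G.Walk s t, (∃ x ∈ p.support, x ∈ W) ∨ ∃ e ∈ p.edges, e ∈ F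

/-- `(k, l)` is a connectivity pair for `s` and `t` in `G`: there is an `s`-`t`
disconnecting pair of order `k` and size `l`, but none of cardinality less than
`k + l` having order at most `k` and size at most `l`. -/
def ConnectivityPair (G : Multigraph V E) (s t : V) (k l : ℕ) : Prop :=
  (∃ (W : Finset V) (F : Finset E), G.DisconnectingPair s t W F ∧ W.card = k ∧ F.card = l) ∧
    ¬ ∃ (W : Finset V) (F : Finset E), G.DisconnectingPair s t W F ∧
        W.card + F.card < k + l ∧ W.card ≤ k ∧ F.card ≤ l

/-- There are `k + l` pairwise edge-disjoint `s`-`t` paths in `G` of which `k + 1`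
are pairwise internally disjoint. -/
def HasGoodPaths (G : Multigraph V E) (s t : V) (k l : ℕ) : Prop :=
  ∃ P : Fin (k + l) → G.Walk s t,
    (∀ i, (P i).IsPath) ∧
    (∀ i j, i ≠ j → EdgeDisjoint (P i) (P j)) ∧
    ∃ S : Finset (Fin (k + l)), S.card = k + 1 ∧
      ∀ i ∈ S, ∀ j ∈ S, i ≠ j → InternallyDisjoint (P i) (P j)

/-- Delete a set of edges from a multigraph. -/
def deleteEdges (G : Multigraph V E) (F : Set E) : Multigraph V E :=
  ⟨G.edgeSet \ F, G.ends, fun e he => G.no_loops e he.1⟩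

end Multigraph


namespace Multigraph

variable {V E : Type} {G : Multigraph V E}

namespace Walk

lemma start_mem_support {u v : V} (p : G.Walk u v) : u ∈ p.support := by
  cases p <;> simp [support]

lemma end_mem_support {u v : V} (p : G.Walk u v) : v ∈ p.support := by
  induction p with
  | nil => simp [support]
  | cons e he huv p ih => simp [support, ih]

lemma edges_subset {u v : V} (p : G.Walk u v) : ∀ e ∈ p.edges, e ∈ G.edgeSet := by
  induction p with
  | nil => simp [edges]
  | cons e he huv p ih =>
      intro f hf
      rcases List.mem_cons.1 hf with h | h
      · exact h ▸ he
      · exact ih f h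

lemma mem_support_of_mem_edges {u v : V} {e : E} {a b : V} (p : G.Walk u v)
    (hep : e ∈ p.edges) (hab : G.ends e = s(a, b)) : a ∈ p.support := by
  induction p with
  | nil => simp [edges] at hep
  | cons f hf hfe q ih =>
      rcases List.mem_cons.1 hep with h | h
      · subst h
        rw [hfe] at hab
        rw [Sym2.eq_iff] at hab
        rcases hab with ⟨h1, h2⟩ | ⟨h1, h2⟩
        · exact h1 ▸ start_mem_support _
        · subst h2
          exact List.mem_cons_of_mem _ (start_mem_support q)
      · exact List.mem_cons_of_mem _ (ih h)

lemma exists_mem_edges_of_ne {u v : V} (p : G.Walk u v) (h : u ≠ v) :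
    ∃ e, e ∈ p.edges := by
  cases p with
  | nil => exact absurd rfl h
  | cons e he huv p => exact ⟨e, List.mem_cons_self⟩

end Walk

lemma exists_walk_deleteEdges {F : Set E} {u v : V} (p : G.Walk u v)
    (h : ∀ e ∈ p.edges, e ∉ F) :
    ∃ q : (G.deleteEdges F).Walk u v, q.support = p.support ∧ q.edges = p.edges := by
  induction p with
  | nil v => exact ⟨.nil v, rfl, rfl⟩
  | cons e he huv p ih =>
      obtain ⟨q, hs, hed⟩ := ih (fun e' he' => h e' (List.mem_cons_of_mem _ he'))
      refine ⟨.cons e ⟨he, h e List.mem_cons_self⟩ huv q, ?_, ?_⟩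
      · simp [Walk.support, hs]
      · simp [Walk.edges, hed]

lemma exists_walk_of_deleteEdges {F : Set E} {u v : V} (p : (G.deleteEdges F).Walk u v) :
    ∃ q : G.Walk u v, q.support = p.support ∧ q.edges = p.edges := by
  induction p with
  | nil v => exact ⟨.nil v, rfl, rfl⟩
  | cons e he huv p ih =>
      obtain ⟨q, hs, hed⟩ := ih
      refine ⟨.cons e he.1 huv q, ?_, ?_⟩
      · simp [Walk.support, hs]
      · simp [Walk.edges, hed]

/-- The single-edge walk along an edge with ends `s(u,v)`. -/
def edgeWalk {e : E} {u v : V} (he : e ∈ G.edgeSet) (h : G.ends e = s(u, v)) :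
    G.Walk u v := .cons e he h (.nil v)

@[simp] lemma edgeWalk_support {e : E} {u v : V} (he : e ∈ G.edgeSet)
    (h : G.ends e = s(u, v)) : (edgeWalk he h).support = [u, v] := rfl

@[simp] lemma edgeWalk_edges {e : E} {u v : V} (he : e ∈ G.edgeSet)
    (h : G.ends e = s(u, v)) : (edgeWalk he h).edges = [e] := rfl


open Set in
lemma compactness_paths (G : Multigraph V E) (s t : V) (c : ℕ)
    (hcut : ∀ W : Finset V, ↑W ⊆ ({s, t} : Set V)ᶜ → W.card ≤ c →
      ∃ p : G.Walk s t, ∀ x ∈ p.support, x ∉ W) :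
    ∃ T : Finset (G.Walk s t), ∀ W : Finset V, ↑W ⊆ ({s, t} : Set V)ᶜ → W.card ≤ c →
      ∃ p ∈ T, ∀ x ∈ p.support, x ∉ W := by
  classical
  let U : G.Walk s t → Set (V → Bool) := fun p => {f | ∀ x ∈ p.support, f x = false}
  have hUopen : ∀ p, IsOpen (U p) := by
    intro p
    have : U p = ⋂ x ∈ {x | x ∈ p.support}, (fun f : V → Bool => f x) ⁻¹' {false} := by
      ext f; simp [U]
    rw [this]
    exact Set.Finite.isOpen_biInter (List.finite_toSet _)
      (fun x _ => (continuous_apply x).isOpen_preimage _ (isOpen_discrete _))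
  let K : Set (V → Bool) :=
    {f | f s = false ∧ f t = false ∧ ∀ Q : Finset V, (∀ x ∈ Q, f x = true) → Q.card ≤ c}
  have hKclosed : IsClosed K := by
    have : K = ((fun f : V → Bool => f s) ⁻¹' {false}) ∩
        (((fun f : V → Bool => f t) ⁻¹' {false}) ∩
          ⋂ (Q : Finset V) (_ : c < Q.card), {f : V → Bool | ∃ x ∈ Q, f x = false}) := by
      ext f
      simp only [K, Set.mem_setOf_eq, Set.mem_inter_iff, Set.mem_preimage,
        Set.mem_singleton_iff, Set.mem_iInter]
      constructor
      · rintro ⟨h1, h2, h3⟩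
        refine ⟨h1, h2, fun Q hQ => ?_⟩
        by_contra h
        push_neg at h
        have : ∀ x ∈ Q, f x = true := fun x hx => by
          have := h x hx; revert this; cases f x <;> simp
        exact absurd (h3 Q this) (by omega)
      · rintro ⟨h1, h2, h3⟩
        refine ⟨h1, h2, fun Q hQ => ?_⟩
        by_contra h
        obtain ⟨x, hx, hfx⟩ := h3 Q (by omega)
        rw [hQ x hx] at hfx; simp at hfx
    rw [this]
    refine IsClosed.inter ?_ (IsClosed.inter ?_ ?_)
    · exact IsClosed.preimage (continuous_apply s) isClosed_singleton
    · exact IsClosed.preimage (continuous_apply t) isClosed_singleton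
    · refine isClosed_iInter fun Q => isClosed_iInter fun _ => ?_
      have : {f : V → Bool | ∃ x ∈ Q, f x = false} =
          ⋃ x ∈ Q, (fun f : V → Bool => f x) ⁻¹' {false} := by ext f; simp
      rw [this]
      exact Set.Finite.isClosed_biUnion (Q.finite_toSet)
        (fun x _ => IsClosed.preimage (continuous_apply x) isClosed_singleton)
  have hKcompact : IsCompact K := hKclosed.isCompact
  have hKcover : K ⊆ ⋃ p : G.Walk s t, U p := by
    intro f hf
    obtain ⟨h1, h2, h3⟩ := hf
    have hfin : {x | f x = true}.Finite := by
      by_contra hinf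
      obtain ⟨Q, hQsub, hQcard⟩ :=
        Set.Infinite.exists_subset_card_eq (s := {x | f x = true}) hinf (c + 1)
      have : ∀ x ∈ Q, f x = true := fun x hx => hQsub hx
      have := h3 Q this
      omega
    set W : Finset V := hfin.toFinset with hW
    have hWsub : (↑W : Set V) ⊆ ({s, t} : Set V)ᶜ := by
      intro x hx
      have hfx : f x = true := by
        have := (Set.Finite.mem_toFinset hfin).1 hx
        exact this
      simp only [Set.mem_compl_iff, Set.mem_insert_iff, Set.mem_singleton_iff]
      rintro (rfl | rfl)
      · rw [h1] at hfx; simp at hfx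
      · rw [h2] at hfx; simp at hfx
    have hWcard : W.card ≤ c := h3 W (fun x hx => (Set.Finite.mem_toFinset hfin).1 hx)
    obtain ⟨p, hp⟩ := hcut W hWsub hWcard
    refine Set.mem_iUnion.2 ⟨p, ?_⟩
    intro x hx
    by_contra hfx
    have hfx : f x = true := by revert hfx; cases f x <;> simp
    exact hp x hx ((Set.Finite.mem_toFinset hfin).2 hfx)
  obtain ⟨T, hT⟩ := hKcompact.elim_finite_subcover U hUopen hKcover
  refine ⟨T, fun W hWsub hWcard => ?_⟩
  set f : V → Bool := fun x => if x ∈ W then true else false with hf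
  have hfK : f ∈ K := by
    refine ⟨?_, ?_, ?_⟩
    · have : s ∉ W := fun h => by
        have := hWsub h; simp at this
      simp [f, this]
    · have : t ∉ W := fun h => by
        have := hWsub h; simp at this
      simp [f, this]
    · intro Q hQ
      have : Q ⊆ W := by
        intro x hx
        have := hQ x hx
        by_contra hxW
        simp [f, hxW] at this
      exact le_trans (Finset.card_le_card this) hWcard
  have := hT hfK
  obtain ⟨p, hpT, hpU⟩ := Set.mem_iUnion₂.1 this
  refine ⟨p, hpT, fun x hx hxW => ?_⟩
  have hx' := hpU x hx
  simp [f, hxW] at hx' 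


lemma menger_via_hyp (𝒢 : Set (Multigraph V E))
    (hclosed : ∀ G ∈ 𝒢, ∀ F : Set E, G.deleteEdges F ∈ 𝒢)
    (hyp : ∀ G ∈ 𝒢, ∀ s t : V, s ≠ t → (¬ ∃ e ∈ G.edgeSet, G.ends e = s(s, t)) →
      ∀ k l : ℕ, 1 ≤ l → G.ConnectivityPair s t k l → HasGoodPaths G s t k l)
    (G : Multigraph V E) (hG : G ∈ 𝒢) (s t : V) (hst : s ≠ t)
    (hadj : ¬ ∃ e ∈ G.edgeSet, G.ends e = s(s, t)) (k : ℕ) (hk : 1 ≤ k)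
    (hcut : ∀ W : Finset V, ↑W ⊆ ({s, t} : Set V)ᶜ → W.card < k →
      ∃ p : G.Walk s t, ∀ x ∈ p.support, x ∉ W) :
    ∃ Q : Fin k → G.Walk s t, (∀ i, (Q i).IsPath) ∧
      (∀ i j, i ≠ j → EdgeDisjoint (Q i) (Q j)) ∧
      (∀ i j, i ≠ j → InternallyDisjoint (Q i) (Q j)) := by
  classical
  -- a finite family of walks covering all small vertex cuts
  obtain ⟨T, hT⟩ := compactness_paths G s t (k - 1)
    (fun W h1 h2 => hcut W h1 (by omega))
  set Tedges : Finset E := T.biUnion (fun p => p.edges.toFinset) with hTedges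
  set X : Set E := G.edgeSet \ ↑Tedges with hX
  set H : Multigraph V E := G.deleteEdges X with hH
  have hHmem : H ∈ 𝒢 := hclosed G hG X
  have hHedge : H.edgeSet ⊆ G.edgeSet := fun e he => he.1
  have hHedge' : H.edgeSet ⊆ ↑Tedges := by
    intro e he
    rcases he with ⟨heG, heX⟩
    by_contra h
    exact heX ⟨heG, h⟩
  have hHadj : ¬ ∃ e ∈ H.edgeSet, H.ends e = s(s, t) := by
    rintro ⟨e, he, hends⟩
    exact hadj ⟨e, hHedge he, hends⟩
  have hHfin : H.edgeSet.Finite := Set.Finite.subset (Tedges.finite_toSet) hHedge'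
  -- min-cut property transfers to H
  have hHcut : ∀ W : Finset V, ↑W ⊆ ({s, t} : Set V)ᶜ → W.card < k →
      ∃ p : H.Walk s t, ∀ x ∈ p.support, x ∉ W := by
    intro W h1 h2
    obtain ⟨p, hpT, hp⟩ := hT W h1 (by omega)
    have hpe : ∀ e ∈ p.edges, e ∉ X := by
      intro e he hex
      exact hex.2 (Finset.mem_biUnion.2 ⟨p, hpT, List.mem_toFinset.2 he⟩)
    obtain ⟨q, hqs, hqe⟩ := exists_walk_deleteEdges p hpe
    exact ⟨q, by rw [hqs]; exact hp⟩
  -- the minimization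
  set A1 : Set ℕ := {n | ∃ (W : Finset V) (F : Finset E),
    H.DisconnectingPair s t W F ∧ W.card < k ∧ F.card = n} with hA1
  have hA1ne : A1.Nonempty := by
    refine ⟨hHfin.toFinset.card, ∅, hHfin.toFinset, ⟨?_, ?_, ?_⟩, by simp; omega, rfl⟩
    · simp
    · simp
    · intro p
      obtain ⟨e, he⟩ := p.exists_mem_edges_of_ne hst
      exact Or.inr ⟨e, he, (Set.Finite.mem_toFinset hHfin).2 (p.edges_subset e he)⟩
  set l₁ : ℕ := sInf A1 with hl₁def
  have hl₁ : l₁ ∈ A1 := Nat.sInf_mem hA1ne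
  set A2 : Set ℕ := {m | ∃ (W : Finset V) (F : Finset E),
    H.DisconnectingPair s t W F ∧ W.card = m ∧ W.card < k ∧ F.card = l₁} with hA2
  have hA2ne : A2.Nonempty := by
    obtain ⟨W, F, h1, h2, h3⟩ := hl₁
    exact ⟨W.card, W, F, h1, rfl, h2, h3⟩
  set k₁ : ℕ := sInf A2 with hk₁def
  obtain ⟨W₁, F₁, hdisc₁, hW₁card, hW₁lt, hF₁card⟩ := Nat.sInf_mem hA2ne
  have hl₁pos : 1 ≤ l₁ := by
    rcases Nat.eq_zero_or_pos l₁ with h0 | h; swap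
    · exact h
    exfalso
    have hF₁emp : F₁ = ∅ := Finset.card_eq_zero.1 (by omega)
    obtain ⟨p, hp⟩ := hHcut W₁ hdisc₁.1 hW₁lt
    rcases hdisc₁.2.2 p with ⟨x, hx, hxW⟩ | ⟨e, _, heF⟩
    · exact hp x hx hxW
    · simp [hF₁emp] at heF
  -- k₁ must equal k - 1
  have hk₁eq : k₁ + 1 = k := by
    by_contra hne
    have hk₁lt : k₁ + 1 < k := by omega
    -- pick an edge of F₁ and improve
    obtain ⟨f, hf⟩ := Finset.card_pos.1 (by omega : 0 < F₁.card)
    have hcontra : l₁ - 1 ∈ A1 → False := by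
      intro hmem
      have := Nat.sInf_le hmem
      omega
    by_cases hdisc' : H.DisconnectingPair s t W₁ (F₁.erase f)
    · exact hcontra ⟨W₁, F₁.erase f, hdisc', hW₁lt,
        by rw [Finset.card_erase_of_mem hf, hF₁card]⟩
    · -- some walk avoids W₁ and all of F₁ except f
      have hsub1 : (↑W₁ : Set V) ⊆ ({s, t} : Set V)ᶜ := hdisc₁.1
      have hsub2 : (↑(F₁.erase f) : Set E) ⊆ H.edgeSet := by
        refine Set.Subset.trans ?_ hdisc₁.2.1
        exact_mod_cast Finset.coe_subset.2 (Finset.erase_subset f F₁)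
      have hwalk : ∃ p : H.Walk s t, (∀ x ∈ p.support, x ∉ W₁) ∧
          (∀ e ∈ p.edges, e ∉ F₁.erase f) := by
        by_contra hno
        push_neg at hno
        refine hdisc' ⟨hsub1, hsub2, fun p => ?_⟩
        by_cases hv : ∃ x ∈ p.support, x ∈ W₁
        · exact Or.inl hv
        · push_neg at hv
          obtain ⟨e, he1, he2⟩ := hno p hv
          exact Or.inr ⟨e, he1, he2⟩
      obtain ⟨p, hpV, hpE⟩ := hwalk
      have hfp : f ∈ p.edges := by
        rcases hdisc₁.2.2 p with ⟨x, hx, hxW⟩ | ⟨e, he, heF⟩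
        · exact absurd hxW (hpV x hx)
        · have : e = f := by
            by_contra hef
            exact hpE e he (Finset.mem_erase.2 ⟨hef, heF⟩)
          exact this ▸ he
      have hfE : f ∈ H.edgeSet := p.edges_subset f hfp
      obtain ⟨⟨a, b⟩, hab⟩ := Quot.exists_rep (H.ends f)
      have hab : H.ends f = s(a, b) := hab.symm
      have hane : a ≠ b := by
        have := H.no_loops f hfE
        rw [hab] at this
        simpa [Sym2.isDiag_iff_proj_eq] using this
      have hnotst : ¬ (H.ends f = s(s, t)) := fun h => hHadj ⟨f, hfE, h⟩
      have hw : ∃ w, (w = a ∨ w = b) ∧ w ≠ s ∧ w ≠ t := by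
        by_cases ha : a ≠ s ∧ a ≠ t
        · exact ⟨a, Or.inl rfl, ha⟩
        push_neg at ha
        by_cases hb : b ≠ s ∧ b ≠ t
        · exact ⟨b, Or.inr rfl, hb⟩
        push_neg at hb
        exfalso
        by_cases has : a = s
        · by_cases hbs : b = s
          · exact hane (has.trans hbs.symm)
          · have hbt : b = t := hb hbs
            exact hnotst (by rw [hab, has, hbt])
        · have hat : a = t := ha has
          by_cases hbs : b = s
          · exact hnotst (by rw [hab, hat, hbs, Sym2.eq_swap])
          · exact hane (hat.trans (hb hbs).symm)
      obtain ⟨w, hwab, hws, hwt⟩ := hw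
      have hwsup : w ∈ p.support := by
        rcases hwab with rfl | rfl
        · exact p.mem_support_of_mem_edges hfp hab
        · exact p.mem_support_of_mem_edges hfp (by rw [hab, Sym2.eq_swap])
      have hwW₁ : w ∉ W₁ := hpV w hwsup
      -- the improved pair
      have hdisc'' : H.DisconnectingPair s t (insert w W₁) (F₁.erase f) := by
        refine ⟨?_, hsub2, ?_⟩
        · intro x hx
          rcases Finset.mem_coe.1 hx |> Finset.mem_insert.1 with rfl | hxW
          · simp only [Set.mem_compl_iff, Set.mem_insert_iff, Set.mem_singleton_iff]
            tauto
          · exact hsub1 (Finset.mem_coe.2 hxW)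
        · intro q
          by_cases hv : ∃ x ∈ q.support, x ∈ insert w W₁
          · exact Or.inl hv
          · push_neg at hv
            rcases hdisc₁.2.2 q with ⟨x, hx, hxW⟩ | ⟨e, he, heF⟩
            · exact absurd (Finset.mem_insert_of_mem hxW) (hv x hx)
            · by_cases hef : e = f
              · subst hef
                have : w ∈ q.support := by
                  rcases hwab with rfl | rfl
                  · exact q.mem_support_of_mem_edges he hab
                  · exact q.mem_support_of_mem_edges he (by rw [hab, Sym2.eq_swap])
                exact absurd (Finset.mem_insert_self w W₁) (hv w this)
              · exact Or.inr ⟨e, he, Finset.mem_erase.2 ⟨hef, heF⟩⟩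
      refine hcontra ⟨insert w W₁, F₁.erase f, hdisc'', ?_, ?_⟩
      · rw [Finset.card_insert_of_notMem hwW₁]; omega
      · rw [Finset.card_erase_of_mem hf, hF₁card]
  -- connectivity pair (k₁, l₁) in H
  have hpair : H.ConnectivityPair s t k₁ l₁ := by
    constructor
    · exact ⟨W₁, F₁, hdisc₁, hW₁card, hF₁card⟩
    · rintro ⟨W', F', hd, hsum, hWle, hFle⟩
      have h1 : F'.card ∈ A1 := ⟨W', F', hd, by omega, rfl⟩
      have h2 : l₁ ≤ F'.card := Nat.sInf_le h1
      have h3 : F'.card = l₁ := by omega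
      have h4 : W'.card ∈ A2 := ⟨W', F', hd, rfl, by omega, h3⟩
      have h5 : k₁ ≤ W'.card := Nat.sInf_le h4
      omega
  obtain ⟨P, hPpath, hPdisj, S, hScard, hSint⟩ :=
    hyp H hHmem s t hst hHadj k₁ l₁ hl₁pos hpair
  have hSk : S.card = k := by omega
  -- enumerate S
  set g : Fin k → Fin (k₁ + l₁) := fun i => (S.equivFin.symm (Fin.cast hSk.symm i) : Fin (k₁ + l₁))
    with hg
  have hgmem : ∀ i, g i ∈ S := fun i => (S.equivFin.symm (Fin.cast hSk.symm i)).2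
  have hginj : Function.Injective g := by
    intro i j hij
    have := Subtype.ext hij  -- coe injective
    have := S.equivFin.symm.injective this
    exact Fin.cast_injective _ this
  -- lift the S-indexed paths back to G
  have hlift : ∀ i : Fin k, ∃ q : G.Walk s t,
      q.support = (P (g i)).support ∧ q.edges = (P (g i)).edges :=
    fun i => exists_walk_of_deleteEdges (P (g i))
  choose Q hQs hQe using hlift
  refine ⟨Q, ?_, ?_, ?_⟩
  · intro i
    have := hPpath (g i)
    rw [Walk.IsPath] at this ⊢
    rw [hQs]; exact this
  · intro i j hij e he
    rw [hQe] at he ⊢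
    exact hPdisj (g i) (g j) (fun h => hij (hginj h)) e he
  · intro i j hij v hv1 hv2
    rw [hQs] at hv1 hv2
    exact hSint (g i) (hgmem i) (g j) (hgmem j) (fun h => hij (hginj h)) v hv1 hv2

lemma assemble (G : Multigraph V E) (s t : V) (hst : s ≠ t) (k l r m : ℕ)
    (hrm : r + m = k + l) (hm : 1 ≤ m)
    (ε : Fin m → E) (hεinj : Function.Injective ε)
    (hεset : ∀ j, ε j ∈ G.edgeSet) (hεends : ∀ j, G.ends (ε j) = s(s, t))
    (Q : Fin r → G.Walk s t) (hQpath : ∀ i, (Q i).IsPath)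
    (hQdisj : ∀ i j, i ≠ j → EdgeDisjoint (Q i) (Q j))
    (hQst : ∀ i, ∀ e ∈ (Q i).edges, ¬ G.ends e = s(s, t))
    (S : Finset (Fin r)) (hS : S.card = k)
    (hSint : ∀ i ∈ S, ∀ j ∈ S, i ≠ j → InternallyDisjoint (Q i) (Q j)) :
    G.HasGoodPaths s t k l := by
  classical
  have hrkl : r ≤ k + l := by omega
  have hrlt : r < k + l := by omega
  set R : Fin (k + l) → G.Walk s t := fun i =>
    if h : (i : ℕ) < r then Q ⟨i, h⟩
    else edgeWalk (hεset ⟨(i : ℕ) - r, by have := i.isLt; omega⟩) (hεends _) with hR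
  have hRQ : ∀ (i : Fin (k + l)) (h : (i : ℕ) < r), R i = Q ⟨i, h⟩ := by
    intro i h; simp only [R, dif_pos h]
  have hRedge : ∀ (i : Fin (k + l)) (h : ¬ (i : ℕ) < r),
      ∃ (j : Fin m), (j : ℕ) = (i : ℕ) - r ∧
        (R i).support = [s, t] ∧ (R i).edges = [ε j] := by
    intro i h
    refine ⟨⟨(i : ℕ) - r, by have := i.isLt; omega⟩, rfl, ?_, ?_⟩ <;>
      simp only [R, dif_neg h, edgeWalk_support, edgeWalk_edges]
  refine ⟨R, ?_, ?_, ?_⟩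
  · intro i
    by_cases h : (i : ℕ) < r
    · rw [hRQ i h]; exact hQpath _
    · obtain ⟨j, _, hsupp, _⟩ := hRedge i h
      rw [Walk.IsPath, hsupp]
      simp [hst]
  · intro i j hij e he hej
    by_cases hi : (i : ℕ) < r <;> by_cases hj : (j : ℕ) < r
    · rw [hRQ i hi] at he
      rw [hRQ j hj] at hej
      have : (⟨(i:ℕ), hi⟩ : Fin r) ≠ ⟨(j:ℕ), hj⟩ := by
        intro hcon
        have hval : ((⟨(i:ℕ), hi⟩ : Fin r) : ℕ) = ((⟨(j:ℕ), hj⟩ : Fin r) : ℕ) :=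
          congrArg Fin.val hcon
        exact hij (Fin.ext hval)
      exact hQdisj _ _ this e he hej
    · rw [hRQ i hi] at he
      obtain ⟨b, _, _, hedges⟩ := hRedge j hj
      rw [hedges] at hej
      have : e = ε b := by simpa using hej
      exact hQst _ e he (this ▸ hεends b)
    · obtain ⟨a, _, _, hedges⟩ := hRedge i hi
      rw [hedges] at he
      have : e = ε a := by simpa using he
      rw [hRQ j hj] at hej
      exact hQst _ e hej (this ▸ hεends a)
    · obtain ⟨a, ha, _, hedgesi⟩ := hRedge i hi
      obtain ⟨b, hb, _, hedgesj⟩ := hRedge j hj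
      rw [hedgesi] at he
      rw [hedgesj] at hej
      have h1 : e = ε a := by simpa using he
      have h2 : e = ε b := by simpa using hej
      have hab : a = b := hεinj (h1 ▸ h2)
      apply hij
      apply Fin.ext
      have hiv := i.isLt; have hjv := j.isLt
      have : (a : ℕ) = (b : ℕ) := congrArg Fin.val hab
      omega
  · set f : Fin r → Fin (k + l) := fun j => ⟨j, by have := j.isLt; omega⟩ with hf
    have hfinj : Function.Injective f := by
      intro a b hab
      have hval : ((f a : Fin (k + l)) : ℕ) = ((f b : Fin (k + l)) : ℕ) :=
        congrArg Fin.val hab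
      exact Fin.ext hval
    set i₀ : Fin (k + l) := ⟨r, hrlt⟩ with hi₀
    refine ⟨S.image f ∪ {i₀}, ?_, ?_⟩
    · rw [Finset.card_union_of_disjoint, Finset.card_image_of_injective _ hfinj,
        Finset.card_singleton, hS]
      rw [Finset.disjoint_singleton_right]
      intro hmem
      obtain ⟨a, _, hfa⟩ := Finset.mem_image.1 hmem
      have : (a : ℕ) = r := congrArg Fin.val hfa
      have := a.isLt
      omega
    · intro i hi j hj hij
      have memcase : ∀ x ∈ S.image f ∪ ({i₀} : Finset (Fin (k + l))),
          (∃ a ∈ S, f a = x) ∨ x = i₀ := by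
        intro x hx
        rcases Finset.mem_union.1 hx with h | h
        · obtain ⟨a, ha, hfa⟩ := Finset.mem_image.1 h
          exact Or.inl ⟨a, ha, hfa⟩
        · exact Or.inr (Finset.mem_singleton.1 h)
      have hedgeSupp : (R i₀).support = [s, t] := by
        obtain ⟨j', _, hs', _⟩ := hRedge i₀ (by simp [i₀])
        exact hs'
      rcases memcase i hi with ⟨a, haS, rfl⟩ | rfl
      · rcases memcase j hj with ⟨b, hbS, rfl⟩ | rfl
        · have hRa : R (f a) = Q a := by
            rw [hRQ (f a) (by simp [f])]
          have hRb : R (f b) = Q b := by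
            rw [hRQ (f b) (by simp [f])]
          rw [hRa, hRb]
          exact hSint a haS b hbS (fun h => hij (congrArg f h))
        · intro v hv1 hv2
          rw [hedgeSupp] at hv2
          simpa using hv2
      · intro v hv1 hv2
        rw [hedgeSupp] at hv1
        simpa using hv1

end Multigraph


open Multigraph in
/-- If the Beineke–Harary conjecture holds for all graphs of an edge-deletion-closed
class `𝒢` and all non-adjacent pairs of distinct vertices, then it holds for all graphs
of `𝒢` and all pairs of distinct vertices. -/
theorem conjecture_nonadjacent_suffices {V E : Type} (𝒢 : Set (Multigraph V E))
    (hclosed : ∀ G ∈ 𝒢, ∀ F : Set E, G.deleteEdges F ∈ 𝒢)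
    (hyp : ∀ G ∈ 𝒢, ∀ s t : V, s ≠ t → (¬ ∃ e ∈ G.edgeSet, G.ends e = s(s, t)) →
      ∀ k l : ℕ, 1 ≤ l → G.ConnectivityPair s t k l → HasGoodPaths G s t k l) :
    ∀ G ∈ 𝒢, ∀ s t : V, s ≠ t →
      ∀ k l : ℕ, 1 ≤ l → G.ConnectivityPair s t k l → HasGoodPaths G s t k l := by
  intro G hG s t hst k l hl hCP
  classical
  by_cases hadj : ∃ e ∈ G.edgeSet, G.ends e = s(s, t)
  swap
  · exact hyp G hG s t hst hadj k l hl hCP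
  set A : Set E := {e | e ∈ G.edgeSet ∧ G.ends e = s(s, t)} with hA
  obtain ⟨⟨W, F, hWF, hWcard, hFcard⟩, hmin⟩ := hCP
  have hAF : A ⊆ ↑F := by
    rintro e ⟨he, hends⟩
    rcases hWF.2.2 (edgeWalk he hends) with ⟨x, hx, hxW⟩ | ⟨e', he', heF⟩
    · exfalso
      have hxc := hWF.1 (Finset.mem_coe.2 hxW)
      simp only [Set.mem_compl_iff, Set.mem_insert_iff, Set.mem_singleton_iff] at hxc
      rcases (by simpa using hx : x = s ∨ x = t) with rfl | rfl <;> tauto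
    · have : e' = e := by simpa using he'
      exact this ▸ heF
  have hAfin : A.Finite := Set.Finite.subset F.finite_toSet hAF
  set F₀ : Finset E := hAfin.toFinset with hF₀
  have hF₀A : ∀ e, e ∈ F₀ ↔ e ∈ A := fun e => Set.Finite.mem_toFinset hAfin
  have hF₀F : F₀ ⊆ F := fun e he => Finset.mem_coe.1 (hAF ((hF₀A e).1 he))
  have hml : F₀.card ≤ l := hFcard ▸ Finset.card_le_card hF₀F
  have hm1 : 1 ≤ F₀.card := by
    obtain ⟨e₀, he₀, hends₀⟩ := hadj
    exact Finset.card_pos.2 ⟨e₀, (hF₀A e₀).2 ⟨he₀, hends₀⟩⟩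
  set G' : Multigraph V E := G.deleteEdges A with hG'def
  have hG' : G' ∈ 𝒢 := hclosed G hG A
  have hG'sub : G'.edgeSet ⊆ G.edgeSet := fun e he => he.1
  have hG'A : ∀ e ∈ G'.edgeSet, e ∉ A := fun e he => he.2
  have hG'adj : ¬ ∃ e ∈ G'.edgeSet, G'.ends e = s(s, t) := by
    rintro ⟨e, he, hends⟩
    exact (hG'A e he) ⟨hG'sub he, hends⟩
  -- the enumeration of the s-t edges
  set ε : Fin F₀.card → E := fun j => (F₀.equivFin.symm j : E) with hε
  have hεinj : Function.Injective ε := fun a b hab =>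
    F₀.equivFin.symm.injective (Subtype.ext hab)
  have hεmem : ∀ j, ε j ∈ A := fun j => (hF₀A _).1 (F₀.equivFin.symm j).2
  have hεset : ∀ j, ε j ∈ G.edgeSet := fun j => (hεmem j).1
  have hεends : ∀ j, G.ends (ε j) = s(s, t) := fun j => (hεmem j).2
  -- lifting disconnecting pairs from G' to G
  have lift : ∀ (W' : Finset V) (F' : Finset E), G'.DisconnectingPair s t W' F' →
      G.DisconnectingPair s t W' (F' ∪ F₀) := by
    intro W' F' hd
    refine ⟨hd.1, ?_, ?_⟩
    · intro e he
      rcases Finset.mem_union.1 (Finset.mem_coe.1 he) with h | h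
      · exact hG'sub (hd.2.1 (Finset.mem_coe.2 h))
      · exact ((hF₀A e).1 h).1
    · intro p
      by_cases hep : ∃ e ∈ p.edges, e ∈ A
      · obtain ⟨e, h1, h2⟩ := hep
        exact Or.inr ⟨e, h1, Finset.mem_union_right _ ((hF₀A e).2 h2)⟩
      · push_neg at hep
        obtain ⟨q, hqs, hqe⟩ := exists_walk_deleteEdges p hep
        rcases hd.2.2 q with ⟨x, hx, hxW⟩ | ⟨e, he, heF⟩
        · rw [hqs] at hx
          exact Or.inl ⟨x, hx, hxW⟩
        · rw [hqe] at he
          exact Or.inr ⟨e, he, Finset.mem_union_left _ heF⟩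
  have hdisjF₀ : ∀ F' : Finset E, (↑F' : Set E) ⊆ G'.edgeSet → Disjoint F' F₀ := by
    intro F' hsub
    rw [Finset.disjoint_left]
    intro e he heF₀
    exact hG'A e (hsub (Finset.mem_coe.2 he)) ((hF₀A e).1 heF₀)
  rcases lt_or_eq_of_le hml with hmlt | hmeq
  · -- CASE: fewer s-t edges than l
    have hCP' : G'.ConnectivityPair s t k (l - F₀.card) := by
      constructor
      · refine ⟨W, F \ F₀, ⟨hWF.1, ?_, ?_⟩, hWcard, ?_⟩
        · intro e he
          obtain ⟨heF, heF₀⟩ := Finset.mem_sdiff.1 (Finset.mem_coe.1 he)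
          exact ⟨hWF.2.1 (Finset.mem_coe.2 heF), fun hA' => heF₀ ((hF₀A e).2 hA')⟩
        · intro p
          obtain ⟨q, hqs, hqe⟩ := exists_walk_of_deleteEdges p
          rcases hWF.2.2 q with ⟨x, hx, hxW⟩ | ⟨e, he, heF⟩
          · rw [hqs] at hx
            exact Or.inl ⟨x, hx, hxW⟩
          · rw [hqe] at he
            refine Or.inr ⟨e, he, Finset.mem_sdiff.2 ⟨heF, fun heF₀ => ?_⟩⟩
            exact hG'A e (p.edges_subset e he) ((hF₀A e).1 heF₀)
        · rw [Finset.card_sdiff_of_subset hF₀F, hFcard]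
      · rintro ⟨W', F', hd, hsum, hWle, hFle⟩
        refine hmin ⟨W', F' ∪ F₀, lift W' F' hd, ?_, hWle, ?_⟩
        · rw [Finset.card_union_of_disjoint (hdisjF₀ F' hd.2.1)]; omega
        · rw [Finset.card_union_of_disjoint (hdisjF₀ F' hd.2.1)]; omega
    obtain ⟨P, hPpath, hPdisj, S, hScard, hSint⟩ :=
      hyp G' hG' s t hst hG'adj k (l - F₀.card) (by omega) hCP'
    obtain ⟨S', hS'sub, hS'card⟩ := Finset.exists_subset_card_eq
      (show k ≤ S.card by omega)
    choose Q hQs hQe using fun i => exists_walk_of_deleteEdges (P i)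
    refine assemble G s t hst k l (k + (l - F₀.card)) F₀.card (by omega) hm1
      ε hεinj hεset hεends Q ?_ ?_ ?_ S' hS'card ?_
    · intro i
      rw [Walk.IsPath, hQs]
      exact hPpath i
    · intro i j hij e he hej
      rw [hQe] at he hej
      exact hPdisj i j hij e he hej
    · intro i e he hends
      rw [hQe] at he
      exact hG'A e ((P i).edges_subset e he)
        ⟨hG'sub ((P i).edges_subset e he), hends⟩
    · intro i hi j hj hij v hv1 hv2
      rw [hQs] at hv1 hv2
      exact hSint i (hS'sub hi) j (hS'sub hj) hij v hv1 hv2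
  · -- CASE: all of F consists of s-t edges
    by_cases hk0 : k = 0
    · subst hk0
      refine assemble G s t hst 0 l 0 F₀.card (by omega) hm1 ε hεinj hεset hεends
        (fun i => i.elim0) (fun i => i.elim0) (fun i => i.elim0) (fun i => i.elim0)
        ∅ (by simp) (by simp)
    have hcut : ∀ W' : Finset V, ↑W' ⊆ ({s, t} : Set V)ᶜ → W'.card < k →
        ∃ p : G'.Walk s t, ∀ x ∈ p.support, x ∉ W' := by
      intro W' hsub hlt
      by_contra hno
      push_neg at hno
      have hd : G'.DisconnectingPair s t W' ∅ :=
        ⟨hsub, by simp, fun p => Or.inl (hno p)⟩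
      have hlifted := lift W' ∅ hd
      rw [Finset.empty_union] at hlifted
      exact hmin ⟨W', F₀, hlifted, by omega, by omega, by omega⟩
    obtain ⟨Q', hQ'path, hQ'disj, hQ'int⟩ :=
      menger_via_hyp 𝒢 hclosed hyp G' hG' s t hst hG'adj k (by omega) hcut
    choose Q hQs hQe using fun i => exists_walk_of_deleteEdges (Q' i)
    refine assemble G s t hst k l k F₀.card (by omega) hm1 ε hεinj hεset hεends
      Q ?_ ?_ ?_ Finset.univ (by simp) ?_
    · intro i
      rw [Walk.IsPath, hQs]
      exact hQ'path i
    · intro i j hij e he hej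
      rw [hQe] at he hej
      exact hQ'disj i j hij e he hej
    · intro i e he hends
      rw [hQe] at he
      exact hG'A e ((Q' i).edges_subset e he)
        ⟨hG'sub ((Q' i).edges_subset e he), hends⟩
    · intro i _ j _ hij v hv1 hv2
      rw [hQs] at hv1 hv2
      exact hQ'int i j hij v hv1 hv2
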